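/- Let g : ℝ₊ → ℝ₊ satisfy GRM (g nondecreasing and g(ω)/ω nonincreasing), and let ω₁, …, ωₙ be positive reals with n ≥ 1. Then the vector (g(ω₁)/Σg(ωᵢ), …, g(ωₙ)/Σg(ωᵢ)) is majorized by the vector (ω₁/Σωᵢ, …, ωₙ/Σωᵢ). -/

import Mathlib

private lemma sum_le_sum_of_top {n : ℕ} {S T : Finset (Fin n)} (hcard : S.card = T.card)
    (f : Fin n → ℝ) (h : ∀ i ∈ T, ∀ j ∉ T, f j ≤ f i) :
    ∑ i ∈ S, f i ≤ ∑ i ∈ T, f i := by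
  have hd : (S \ T).card = (T \ S).card := Finset.card_sdiff_comm hcard
  have e := Finset.equivOfCardEq hd
  have h1 : ∑ i ∈ S \ T, f i ≤ ∑ i ∈ T \ S, f i := by
    rw [← Finset.sum_coe_sort (S \ T) f, ← Finset.sum_coe_sort (T \ S) f,
      ← Equiv.sum_comp e (fun x : (T \ S : Finset (Fin n)) => f x)]
    apply Finset.sum_le_sum
    intro x _
    have hx : (x : Fin n) ∉ T := (Finset.mem_sdiff.mp x.2).2
    have hex : ((e x : Fin n)) ∈ T := (Finset.mem_sdiff.mp (e x).2).1
    exact h _ hex _ hx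
  calc ∑ i ∈ S, f i = ∑ i ∈ S ∩ T, f i + ∑ i ∈ S \ T, f i :=
        (Finset.sum_inter_add_sum_sdiff S T f).symm
    _ ≤ ∑ i ∈ T ∩ S, f i + ∑ i ∈ T \ S, f i := by
        rw [Finset.inter_comm]; exact add_le_add_right h1 _
    _ = ∑ i ∈ T, f i := Finset.sum_inter_add_sum_sdiff T S f

theorem stmt_1 (n : ℕ) (hn : 1 ≤ n) (g : ℝ → ℝ)
    (hgpos : ∀ ω, 0 < ω → 0 < g ω)
    (hmono : ∀ a b, 0 < a → a ≤ b → g a ≤ g b)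
    (hratio : ∀ a b, 0 < a → a ≤ b → g b / b ≤ g a / a)
    (ω : Fin n → ℝ) (hω : ∀ i, 0 < ω i) :
    ∀ S : Finset (Fin n), ∃ T : Finset (Fin n), T.card = S.card ∧
      ∑ i ∈ S, g (ω i) / (∑ j, g (ω j)) ≤ ∑ i ∈ T, ω i / (∑ j, ω j) := by
  intro S
  have hne : (Finset.univ : Finset (Fin n)).Nonempty := ⟨⟨0, hn⟩, Finset.mem_univ _⟩
  have hW : 0 < ∑ j, ω j := Finset.sum_pos (fun i _ => hω i) hne
  have hG : 0 < ∑ j, g (ω j) := Finset.sum_pos (fun i _ => hgpos _ (hω i)) hne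
  -- choose T of card S.card maximizing ∑ ω
  have hkn : S.card ≤ (Finset.univ : Finset (Fin n)).card := Finset.card_le_univ S
  have hpne : ((Finset.univ : Finset (Fin n)).powersetCard S.card).Nonempty :=
    Finset.powersetCard_nonempty.mpr hkn
  obtain ⟨T, hTmem, hTmax⟩ := Finset.exists_max_image _ (fun t => ∑ i ∈ t, ω i) hpne
  have hTcard : T.card = S.card := (Finset.mem_powersetCard.mp hTmem).2
  -- T dominates its complement
  have htop : ∀ i ∈ T, ∀ j ∉ T, ω j ≤ ω i := by
    intro i hi j hj
    by_contra hlt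
    push_neg at hlt
    have hji : j ∉ T.erase i := fun h => hj (Finset.mem_of_mem_erase h)
    set T' := insert j (T.erase i) with hT'
    have hT'card : T'.card = S.card := by
      rw [hT', Finset.card_insert_of_notMem hji, Finset.card_erase_of_mem hi, hTcard]
      have : 1 ≤ S.card := by
        rw [← hTcard]; exact Finset.card_pos.mpr ⟨i, hi⟩
      omega
    have hT'mem : T' ∈ (Finset.univ : Finset (Fin n)).powersetCard S.card :=
      Finset.mem_powersetCard.mpr ⟨Finset.subset_univ _, hT'card⟩
    have hle := hTmax T' hT'mem
    have hs1 : ∑ x ∈ T', ω x = ω j + ∑ x ∈ T.erase i, ω x :=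
      Finset.sum_insert hji
    have hs2 : ∑ x ∈ T.erase i, ω x + ω i = ∑ x ∈ T, ω x :=
      Finset.sum_erase_add T ω hi
    nlinarith
  refine ⟨T, hTcard, ?_⟩
  -- step 2: ∑_S g ≤ ∑_T g
  have h2 : ∑ i ∈ S, g (ω i) ≤ ∑ i ∈ T, g (ω i) := by
    apply sum_le_sum_of_top hTcard.symm
    intro i hi j hj
    exact hmono _ _ (hω j) (htop i hi j hj)
  -- step 3: cross inequality
  have h3 : (∑ i ∈ T, g (ω i)) * ∑ j, ω j ≤ (∑ i ∈ T, ω i) * ∑ j, g (ω j) := by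
    have hsplit : ∀ f : Fin n → ℝ, ∑ j, f j = ∑ j ∈ T, f j + ∑ j ∈ Tᶜ, f j :=
      fun f => (Finset.sum_add_sum_compl T f).symm
    rw [hsplit ω, hsplit (fun j => g (ω j)), mul_add, mul_add,
      mul_comm (∑ i ∈ T, g (ω i)) (∑ j ∈ T, ω j)]
    apply add_le_add le_rfl
    rw [Finset.sum_mul_sum, Finset.sum_mul_sum]
    apply Finset.sum_le_sum
    intro i hi
    apply Finset.sum_le_sum
    intro j hj
    have hji : ω j ≤ ω i := htop i hi j (Finset.mem_compl.mp hj)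
    have := hratio (ω j) (ω i) (hω j) hji
    rw [div_le_div_iff₀ (hω i) (hω j)] at this
    linarith
  calc ∑ i ∈ S, g (ω i) / (∑ j, g (ω j)) = (∑ i ∈ S, g (ω i)) / ∑ j, g (ω j) := by
        rw [Finset.sum_div]
    _ ≤ (∑ i ∈ T, g (ω i)) / ∑ j, g (ω j) := by gcongr
    _ ≤ (∑ i ∈ T, ω i) / ∑ j, ω j := by
        rw [div_le_div_iff₀ hG hW]; exact h3
    _ = ∑ i ∈ T, ω i / (∑ j, ω j) := by rw [Finset.sum_div]
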